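/- Let G be a finite simple graph with vertex set V, let k be a positive integer, let T ⊆ V satisfy |Γ_T(Z)| ≥ k − 1 for every Steiner T-cut Z, and fix r ∈ T. Let D be the family of demand cuts, i.e., Steiner (T,r)-cuts X with |Γ_T(X)| = k − 1, and let M be the family of min-cores. For any M' ⊆ M, the family C' := ⋃_{Z ∈ M'} C(Z) is uncrossable if and only if there are no X, Y ∈ C' with X ∩ T ⊆ Γ(Y). -/
import Mathlib


/-- `nbr G X` is Γ(X): the set of vertices outside `X` adjacent to a vertex of `X`. -/
def nbr {V : Type*} [Fintype V] [DecidableEq V] (G : SimpleGraph V) [DecidableRel G.Adj]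
    (X : Finset V) : Finset V :=
  Finset.univ.filter (fun v => v ∉ X ∧ ∃ u ∈ X, G.Adj u v)

/-- `cl G X` is X⁺ = X ∪ Γ(X). -/
def cl {V : Type*} [Fintype V] [DecidableEq V] (G : SimpleGraph V) [DecidableRel G.Adj]
    (X : Finset V) : Finset V :=
  X ∪ nbr G X

/-- A demand cut: a Steiner (T,r)-cut X with |Γ_T(X)| = k - 1. -/
def IsDemand {V : Type*} [Fintype V] [DecidableEq V] (G : SimpleGraph V) [DecidableRel G.Adj]
    (T : Finset V) (k : ℕ) (r : V) (X : Finset V) : Prop :=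
  (X ∩ T).Nonempty ∧ (T \ cl G X).Nonempty ∧ r ∉ cl G X ∧ (nbr G X ∩ T).card = k - 1

/-- A min-core: a minimal demand cut. -/
def IsMinCore {V : Type*} [Fintype V] [DecidableEq V] (G : SimpleGraph V) [DecidableRel G.Adj]
    (T : Finset V) (k : ℕ) (r : V) (X : Finset V) : Prop :=
  IsDemand G T k r X ∧ ∀ Y : Finset V, IsDemand G T k r Y → Y ⊆ X → Y = X

/-- A core: a demand cut containing exactly one min-core as a subset. -/
def IsCore {V : Type*} [Fintype V] [DecidableEq V] (G : SimpleGraph V) [DecidableRel G.Adj]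
    (T : Finset V) (k : ℕ) (r : V) (X : Finset V) : Prop :=
  IsDemand G T k r X ∧ ∃! Z : Finset V, IsMinCore G T k r Z ∧ Z ⊆ X

/-- The core family C(Z) of a min-core Z: the cores containing Z. -/
def coreFam {V : Type*} [Fintype V] [DecidableEq V] (G : SimpleGraph V) [DecidableRel G.Adj]
    (T : Finset V) (k : ℕ) (r : V) (Z : Finset V) : Set (Finset V) :=
  {X | IsCore G T k r X ∧ Z ⊆ X}

/-- A family F of subsets of V is uncrossable with respect to T. -/
def Uncrossable {V : Type*} [Fintype V] [DecidableEq V] (G : SimpleGraph V)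
    [DecidableRel G.Adj] (T : Finset V) (F : Set (Finset V)) : Prop :=
  (∀ X ∈ F, ∀ Y ∈ F, (X ∩ Y ∈ F ∧ X ∪ Y ∈ F) ∨ (X \ cl G Y ∈ F ∧ Y \ cl G X ∈ F)) ∧
  (∀ X ∈ F, ∀ Y ∈ F, (X ∩ Y ∩ T).Nonempty → X ∩ Y ∈ F ∧ X ∪ Y ∈ F)

section Aux
variable {V : Type*} [Fintype V] [DecidableEq V] (G : SimpleGraph V) [DecidableRel G.Adj]

lemma mem_nbr {X : Finset V} {v : V} :
    v ∈ nbr G X ↔ v ∉ X ∧ ∃ u ∈ X, G.Adj u v := by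
  simp [nbr]

lemma mem_cl {X : Finset V} {v : V} :
    v ∈ cl G X ↔ v ∈ X ∨ (v ∉ X ∧ ∃ u ∈ X, G.Adj u v) := by
  simp [cl, mem_nbr, Finset.mem_union]

lemma mem_cl_of_adj {X : Finset V} {u v : V} (hu : u ∈ X) (h : G.Adj u v) :
    v ∈ cl G X := by
  rw [mem_cl]
  by_cases hv : v ∈ X
  · exact Or.inl hv
  · exact Or.inr ⟨hv, u, hu, h⟩

lemma cl_mono {X Y : Finset V} (h : X ⊆ Y) : cl G X ⊆ cl G Y := by
  intro v hv
  rw [mem_cl] at hv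
  rcases hv with h1 | ⟨_, u, hu, hadj⟩
  · exact Finset.mem_union_left _ (h h1)
  · exact mem_cl_of_adj G (h hu) hadj

lemma cl_union_subset {X Y : Finset V} : cl G (X ∪ Y) ⊆ cl G X ∪ cl G Y := by
  intro v hv
  rw [mem_cl] at hv
  rcases hv with h1 | ⟨_, u, hu, hadj⟩
  · rcases Finset.mem_union.1 h1 with h | h
    · exact Finset.mem_union_left _ (Finset.mem_union_left _ h)
    · exact Finset.mem_union_right _ (Finset.mem_union_left _ h)
  · rcases Finset.mem_union.1 hu with h | h
    · exact Finset.mem_union_left _ (mem_cl_of_adj G h hadj)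
    · exact Finset.mem_union_right _ (mem_cl_of_adj G h hadj)

lemma subset_cl {X : Finset V} : X ⊆ cl G X := Finset.subset_union_left

lemma nbr_subset_cl {X : Finset V} : nbr G X ⊆ cl G X := Finset.subset_union_right

-- submodular inclusions
lemma sub_union (X Y : Finset V) :
    nbr G (X ∩ Y) ∪ nbr G (X ∪ Y) ⊆ nbr G X ∪ nbr G Y := by
  intro v hv
  rcases Finset.mem_union.1 hv with h | h
  · rw [mem_nbr] at h
    obtain ⟨hvn, u, hu, hadj⟩ := h
    rcases Finset.mem_inter.1 hu with ⟨huX, huY⟩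
    by_cases hvX : v ∈ X
    · have hvY : v ∉ Y := fun hvY => hvn (Finset.mem_inter.2 ⟨hvX, hvY⟩)
      exact Finset.mem_union_right _ (mem_nbr G |>.2 ⟨hvY, u, huY, hadj⟩)
    · exact Finset.mem_union_left _ (mem_nbr G |>.2 ⟨hvX, u, huX, hadj⟩)
  · rw [mem_nbr] at h
    obtain ⟨hvn, u, hu, hadj⟩ := h
    have hvX : v ∉ X := fun h => hvn (Finset.mem_union_left _ h)
    have hvY : v ∉ Y := fun h => hvn (Finset.mem_union_right _ h)
    rcases Finset.mem_union.1 hu with h | h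
    · exact Finset.mem_union_left _ (mem_nbr G |>.2 ⟨hvX, u, h, hadj⟩)
    · exact Finset.mem_union_right _ (mem_nbr G |>.2 ⟨hvY, u, h, hadj⟩)

lemma sub_inter (X Y : Finset V) :
    nbr G (X ∩ Y) ∩ nbr G (X ∪ Y) ⊆ nbr G X ∩ nbr G Y := by
  intro v hv
  rcases Finset.mem_inter.1 hv with ⟨h1, h2⟩
  rw [mem_nbr] at h1 h2
  obtain ⟨hvn1, u, hu, hadj⟩ := h1
  obtain ⟨hvn2, _⟩ := h2
  have hvX : v ∉ X := fun h => hvn2 (Finset.mem_union_left _ h)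
  have hvY : v ∉ Y := fun h => hvn2 (Finset.mem_union_right _ h)
  rcases Finset.mem_inter.1 hu with ⟨huX, huY⟩
  exact Finset.mem_inter.2 ⟨(mem_nbr G).2 ⟨hvX, u, huX, hadj⟩,
    (mem_nbr G).2 ⟨hvY, u, huY, hadj⟩⟩

-- posimodular inclusions
lemma posi_mem (X Y : Finset V) {v : V} (hv : v ∈ nbr G (X \ cl G Y)) :
    v ∈ nbr G X ∪ nbr G Y := by
  rw [mem_nbr] at hv
  obtain ⟨hvn, u, hu, hadj⟩ := hv
  rcases Finset.mem_sdiff.1 hu with ⟨huX, hucl⟩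
  by_cases hvX : v ∈ X
  · have hvcl : v ∈ cl G Y := by
      by_contra hvcl
      exact hvn (Finset.mem_sdiff.2 ⟨hvX, hvcl⟩)
    have hvY : v ∉ Y := fun h => hucl (mem_cl_of_adj G h hadj.symm)
    rw [mem_cl] at hvcl
    rcases hvcl with h | h
    · exact absurd h hvY
    · exact Finset.mem_union_right _ ((mem_nbr G).2 h)
  · exact Finset.mem_union_left _ ((mem_nbr G).2 ⟨hvX, u, huX, hadj⟩)

lemma posi_union (X Y : Finset V) :
    nbr G (X \ cl G Y) ∪ nbr G (Y \ cl G X) ⊆ nbr G X ∪ nbr G Y := by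
  intro v hv
  rcases Finset.mem_union.1 hv with h | h
  · exact posi_mem G X Y h
  · exact Finset.union_comm (nbr G X) (nbr G Y) ▸ posi_mem G Y X h

lemma posi_inter (X Y : Finset V) :
    nbr G (X \ cl G Y) ∩ nbr G (Y \ cl G X) ⊆ nbr G X ∩ nbr G Y := by
  intro v hv
  rcases Finset.mem_inter.1 hv with ⟨h1, h2⟩
  rw [mem_nbr] at h1 h2
  obtain ⟨_, u, hu, hadj⟩ := h1
  obtain ⟨_, w, hw, hadjw⟩ := h2
  rcases Finset.mem_sdiff.1 hu with ⟨huX, hucl⟩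
  rcases Finset.mem_sdiff.1 hw with ⟨hwY, hwcl⟩
  have hvX : v ∉ X := fun h => hwcl (mem_cl_of_adj G h hadjw.symm)
  have hvY : v ∉ Y := fun h => hucl (mem_cl_of_adj G h hadj.symm)
  exact Finset.mem_inter.2 ⟨(mem_nbr G).2 ⟨hvX, u, huX, hadj⟩,
    (mem_nbr G).2 ⟨hvY, w, hwY, hadjw⟩⟩

lemma card_of_incl {P Q R S : Finset V} (h1 : P ∪ Q ⊆ R ∪ S) (h2 : P ∩ Q ⊆ R ∩ S) :
    P.card + Q.card ≤ R.card + S.card := by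
  rw [← Finset.card_inter_add_card_union P Q, ← Finset.card_inter_add_card_union R S]
  exact Nat.add_le_add (Finset.card_le_card h2) (Finset.card_le_card h1)

end Aux

section Part2
variable {V : Type*} [Fintype V] [DecidableEq V] {G : SimpleGraph V} [DecidableRel G.Adj]
  {T : Finset V} {k : ℕ} {r : V}
  (hTconn : ∀ Z : Finset V, (Z ∩ T).Nonempty → (T \ cl G Z).Nonempty →
      k - 1 ≤ (nbr G Z ∩ T).card)
  (hr : r ∈ T)

include hTconn hr in
/-- If X, Y are demand cuts with X∩Y∩T nonempty, then X∩Y and X∪Y are demand cuts. -/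
lemma demand_inter_union {X Y : Finset V}
    (hX : IsDemand G T k r X) (hY : IsDemand G T k r Y)
    (hne : (X ∩ Y ∩ T).Nonempty) :
    IsDemand G T k r (X ∩ Y) ∧ IsDemand G T k r (X ∪ Y) := by
  obtain ⟨hX1, _, hX3, hX4⟩ := hX
  obtain ⟨hY1, _, hY3, hY4⟩ := hY
  have hrI : r ∉ cl G (X ∩ Y) := fun h => hX3 (cl_mono G Finset.inter_subset_left h)
  have hrU : r ∉ cl G (X ∪ Y) := fun h => by
    rcases Finset.mem_union.1 (cl_union_subset G h) with h | h
    exacts [hX3 h, hY3 h]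
  have hTI : (T \ cl G (X ∩ Y)).Nonempty := ⟨r, Finset.mem_sdiff.2 ⟨hr, hrI⟩⟩
  have hTU : (T \ cl G (X ∪ Y)).Nonempty := ⟨r, Finset.mem_sdiff.2 ⟨hr, hrU⟩⟩
  have hUne : ((X ∪ Y) ∩ T).Nonempty := by
    obtain ⟨t, ht⟩ := hX1
    exact ⟨t, Finset.mem_inter.2 ⟨Finset.mem_union_left _ (Finset.mem_inter.1 ht).1,
      (Finset.mem_inter.1 ht).2⟩⟩
  have h1 := hTconn (X ∩ Y) hne hTI
  have h2 := hTconn (X ∪ Y) hUne hTU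
  have hsub : (nbr G (X ∩ Y) ∩ T).card + (nbr G (X ∪ Y) ∩ T).card ≤
      (nbr G X ∩ T).card + (nbr G Y ∩ T).card := by
    apply card_of_incl
    · rw [← Finset.union_inter_distrib_right, ← Finset.union_inter_distrib_right]
      exact Finset.inter_subset_inter (sub_union G X Y) (Finset.Subset.refl T)
    · intro v hv
      simp only [Finset.mem_inter] at hv ⊢
      obtain ⟨⟨h1, ht⟩, h2, _⟩ := hv
      rcases Finset.mem_inter.1 (sub_inter G X Y (Finset.mem_inter.2 ⟨h1, h2⟩)) with ⟨a, b⟩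
      exact ⟨⟨a, ht⟩, b, ht⟩
  rw [hX4, hY4] at hsub
  constructor
  · exact ⟨hne, hTI, hrI, by omega⟩
  · exact ⟨hUne, hTU, hrU, by omega⟩

include hTconn hr in
/-- If X, Y are demand cuts and both differences meet T, they are demand cuts. -/
lemma demand_diffs {X Y : Finset V}
    (hX : IsDemand G T k r X) (hY : IsDemand G T k r Y)
    (hne1 : ((X \ cl G Y) ∩ T).Nonempty) (hne2 : ((Y \ cl G X) ∩ T).Nonempty) :
    IsDemand G T k r (X \ cl G Y) ∧ IsDemand G T k r (Y \ cl G X) := by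
  obtain ⟨_, _, hX3, hX4⟩ := hX
  obtain ⟨_, _, hY3, hY4⟩ := hY
  have hr1 : r ∉ cl G (X \ cl G Y) := fun h => hX3 (cl_mono G Finset.sdiff_subset h)
  have hr2 : r ∉ cl G (Y \ cl G X) := fun h => hY3 (cl_mono G Finset.sdiff_subset h)
  have hT1 : (T \ cl G (X \ cl G Y)).Nonempty := ⟨r, Finset.mem_sdiff.2 ⟨hr, hr1⟩⟩
  have hT2 : (T \ cl G (Y \ cl G X)).Nonempty := ⟨r, Finset.mem_sdiff.2 ⟨hr, hr2⟩⟩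
  have h1 := hTconn (X \ cl G Y) hne1 hT1
  have h2 := hTconn (Y \ cl G X) hne2 hT2
  have hsub : (nbr G (X \ cl G Y) ∩ T).card + (nbr G (Y \ cl G X) ∩ T).card ≤
      (nbr G X ∩ T).card + (nbr G Y ∩ T).card := by
    apply card_of_incl
    · rw [← Finset.union_inter_distrib_right, ← Finset.union_inter_distrib_right]
      exact Finset.inter_subset_inter (posi_union G X Y) (Finset.Subset.refl T)
    · intro v hv
      simp only [Finset.mem_inter] at hv ⊢
      obtain ⟨⟨h1, ht⟩, h2, _⟩ := hv
      rcases Finset.mem_inter.1 (posi_inter G X Y (Finset.mem_inter.2 ⟨h1, h2⟩)) with ⟨a, b⟩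
      exact ⟨⟨a, ht⟩, b, ht⟩
  rw [hX4, hY4] at hsub
  constructor
  · exact ⟨hne1, hT1, hr1, by omega⟩
  · exact ⟨hne2, hT2, hr2, by omega⟩

/-- Every demand cut contains a min-core. -/
lemma exists_minCore {X : Finset V} (hX : IsDemand G T k r X) :
    ∃ Z : Finset V, IsMinCore G T k r Z ∧ Z ⊆ X := by
  obtain ⟨n, hn⟩ : ∃ n, X.card ≤ n := ⟨X.card, le_refl _⟩
  induction n generalizing X with
  | zero =>
    exfalso
    obtain ⟨t, ht⟩ := hX.1
    have : X = ∅ := Finset.card_eq_zero.1 (Nat.le_zero.1 hn)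
    rw [this] at ht
    simp at ht
  | succ n ih =>
    by_cases hmin : ∀ Y : Finset V, IsDemand G T k r Y → Y ⊆ X → Y = X
    · exact ⟨X, ⟨hX, hmin⟩, Finset.Subset.refl X⟩
    · push_neg at hmin
      obtain ⟨Y, hY, hYX, hYne⟩ := hmin
      have hlt : Y.card < X.card := Finset.card_lt_card (lt_of_le_of_ne hYX hYne)
      obtain ⟨Z, hZ, hZY⟩ := ih hY (by omega)
      exact ⟨Z, hZ, hZY.trans hYX⟩

end Part2

theorem stmt_11 {V : Type*} [Fintype V] [DecidableEq V]
    (G : SimpleGraph V) [DecidableRel G.Adj] (k : ℕ) (hk : 1 ≤ k)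
    (T : Finset V)
    -- |Γ_T(Z)| ≥ k-1 for every Steiner T-cut Z
    (hTconn : ∀ Z : Finset V, (Z ∩ T).Nonempty → (T \ cl G Z).Nonempty →
      k - 1 ≤ (nbr G Z ∩ T).card)
    (r : V) (hr : r ∈ T)
    (M' : Set (Finset V)) (hM' : ∀ Z ∈ M', IsMinCore G T k r Z) :
    Uncrossable G T (⋃ Z ∈ M', coreFam G T k r Z) ↔
      ¬ ∃ X ∈ ⋃ Z ∈ M', coreFam G T k r Z, ∃ Y ∈ ⋃ Z ∈ M', coreFam G T k r Z,
        X ∩ T ⊆ nbr G Y := by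
  set C : Set (Finset V) := ⋃ Z ∈ M', coreFam G T k r Z with hC
  have hmemC : ∀ X : Finset V, X ∈ C ↔ ∃ Z ∈ M', IsCore G T k r X ∧ Z ⊆ X := by
    intro X
    simp only [hC, coreFam, Set.mem_iUnion, Set.mem_setOf_eq, exists_prop]
  have hfacts : ∀ X ∈ C, IsDemand G T k r X ∧
      ∃ Z ∈ M', Z ⊆ X ∧ ∀ W, IsMinCore G T k r W → W ⊆ X → W = Z := by
    intro X hX
    rw [hmemC] at hX
    obtain ⟨Z, hZM, ⟨hXd, U, ⟨hU, hUX⟩, huniq⟩, hZX⟩ := hX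
    have hZU : Z = U := huniq Z ⟨hM' Z hZM, hZX⟩
    exact ⟨hXd, Z, hZM, hZX, fun W hW hWX => (huniq W ⟨hW, hWX⟩).trans hZU.symm⟩
  have hmk : ∀ (Z X : Finset V), Z ∈ M' → IsDemand G T k r X → Z ⊆ X →
      (∀ W, IsMinCore G T k r W → W ⊆ X → W = Z) → X ∈ C := by
    intro Z X hZM hXd hZX huni
    rw [hmemC]
    exact ⟨Z, hZM, ⟨hXd, Z, ⟨hM' Z hZM, hZX⟩, fun W hW => huni W hW.1 hW.2⟩, hZX⟩
  have hsubC : ∀ X ∈ C, ∀ W, IsDemand G T k r W → W ⊆ X → W ∈ C := by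
    intro X hX W hWd hWX
    obtain ⟨hXd, Z, hZM, hZX, huni⟩ := hfacts X hX
    obtain ⟨U, hU, hUW⟩ := exists_minCore hWd
    have hUZ : U = Z := huni U hU (hUW.trans hWX)
    exact hmk Z W hZM hWd (hUZ ▸ hUW)
      (fun W' hW' hW'W => huni W' hW' (hW'W.trans hWX))
  have hcase2 : ∀ X ∈ C, ∀ Y ∈ C, (X ∩ Y ∩ T).Nonempty → X ∩ Y ∈ C ∧ X ∪ Y ∈ C := by
    intro X hXC Y hYC hne
    obtain ⟨hXd, ZX, hZXM, hZXX, huniX⟩ := hfacts X hXC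
    obtain ⟨hYd, ZY, hZYM, hZYY, huniY⟩ := hfacts Y hYC
    obtain ⟨hdemI, hdemU⟩ := demand_inter_union hTconn hr hXd hYd hne
    have hIC : X ∩ Y ∈ C := hsubC X hXC _ hdemI Finset.inter_subset_left
    obtain ⟨U, hU, hUI⟩ := exists_minCore hdemI
    have hUZX : U = ZX := huniX U hU (hUI.trans Finset.inter_subset_left)
    have hUZY : U = ZY := huniY U hU (hUI.trans Finset.inter_subset_right)
    refine ⟨hIC, hmk ZX (X ∪ Y) hZXM hdemU (hZXX.trans Finset.subset_union_left) ?_⟩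
    intro W hW hWU
    obtain ⟨t, ht⟩ := hW.1.1
    rcases Finset.mem_inter.1 ht with ⟨htW, htT⟩
    rcases Finset.mem_union.1 (hWU htW) with htX | htY
    · have hWXne : (W ∩ X ∩ T).Nonempty :=
        ⟨t, Finset.mem_inter.2 ⟨Finset.mem_inter.2 ⟨htW, htX⟩, htT⟩⟩
      have hWXd := (demand_inter_union hTconn hr hW.1 hXd hWXne).1
      have hWX : W ∩ X = W := hW.2 _ hWXd Finset.inter_subset_left
      have hWsub : W ⊆ X := by rw [← hWX]; exact Finset.inter_subset_right
      exact huniX W hW hWsub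
    · have hWYne : (W ∩ Y ∩ T).Nonempty :=
        ⟨t, Finset.mem_inter.2 ⟨Finset.mem_inter.2 ⟨htW, htY⟩, htT⟩⟩
      have hWYd := (demand_inter_union hTconn hr hW.1 hYd hWYne).1
      have hWY : W ∩ Y = W := hW.2 _ hWYd Finset.inter_subset_left
      have hWsub : W ⊆ Y := by rw [← hWY]; exact Finset.inter_subset_right
      exact (huniY W hW hWsub).trans (hUZY.symm.trans hUZX)
  constructor
  · -- Uncrossable → no bad pair
    rintro ⟨hU1, _⟩ ⟨X, hX, Y, hY, hsub⟩
    rcases hU1 X hX Y hY with ⟨hIC, _⟩ | ⟨hDC, _⟩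
    · obtain ⟨t, ht⟩ := (hfacts _ hIC).1.1
      rcases Finset.mem_inter.1 ht with ⟨htXY, htT⟩
      rcases Finset.mem_inter.1 htXY with ⟨htX, htY⟩
      have := hsub (Finset.mem_inter.2 ⟨htX, htT⟩)
      exact ((mem_nbr G).1 this).1 htY
    · obtain ⟨t, ht⟩ := (hfacts _ hDC).1.1
      rcases Finset.mem_inter.1 ht with ⟨htXY, htT⟩
      rcases Finset.mem_sdiff.1 htXY with ⟨htX, htcl⟩
      exact htcl (nbr_subset_cl G (hsub (Finset.mem_inter.2 ⟨htX, htT⟩)))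
  · -- no bad pair → Uncrossable
    intro hno
    push_neg at hno
    constructor
    · intro X hX Y hY
      by_cases hne : (X ∩ Y ∩ T).Nonempty
      · exact Or.inl (hcase2 X hX Y hY hne)
      · right
        have hXYT : X ∩ Y ∩ T = ∅ := Finset.not_nonempty_iff_eq_empty.1 hne
        obtain ⟨hXd, _⟩ := hfacts X hX
        obtain ⟨hYd, _⟩ := hfacts Y hY
        have hgetdiff : ∀ A ∈ C, ∀ B ∈ C, A ∩ B ∩ T = ∅ →
            ((A \ cl G B) ∩ T).Nonempty := by
          intro A hA B hB hABT
          obtain ⟨t, htA, htn⟩ := Finset.not_subset.1 (hno A hA B hB)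
          rcases Finset.mem_inter.1 htA with ⟨htA', htT⟩
          have htB : t ∉ B := by
            intro htB
            have : t ∈ A ∩ B ∩ T :=
              Finset.mem_inter.2 ⟨Finset.mem_inter.2 ⟨htA', htB⟩, htT⟩
            rw [hABT] at this
            exact absurd this (Finset.notMem_empty t)
          have htcl : t ∉ cl G B := by
            intro h
            rcases Finset.mem_union.1 h with h | h
            exacts [htB h, htn h]
          exact ⟨t, Finset.mem_inter.2 ⟨Finset.mem_sdiff.2 ⟨htA', htcl⟩, htT⟩⟩
        have hne1 := hgetdiff X hX Y hY hXYT
        have hne2 := hgetdiff Y hY X hX (by rw [Finset.inter_comm Y X, hXYT])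
        obtain ⟨hd1, hd2⟩ := demand_diffs hTconn hr hXd hYd hne1 hne2
        exact ⟨hsubC X hX _ hd1 Finset.sdiff_subset, hsubC Y hY _ hd2 Finset.sdiff_subset⟩
    · exact hcase2
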